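/- Let K ⊆ ℝ^n be a convex body, let L ⊆ ℝ^n be a full-rank lattice with dual lattice L*, and let f > 0. Assume the flatness bound: for every convex body C ⊆ ℝ^n, if λ₁((C-C)*, L*) ≥ f then C ∩ L ≠ ∅. Let y ∈ L* ∖ {0} satisfy ‖y‖_{(K-K)*} ≤ λ₁((K-K)*, L*) + 1. Then, if K ∩ L ≠ ∅, there exists x ∈ K ∩ L with ⟨y, x⟩ ≤ inf_{z ∈ K} ⟨y, z⟩ + f + 1. -/
import Mathlib

open MeasureTheory Pointwise
open scoped ENNReal RealInnerProductSpace

noncomputable section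

abbrev Euc (n : ℕ) := EuclideanSpace ℝ (Fin n)

/-- A convex body: a compact convex set with nonempty interior. -/
def IsConvexBody {n : ℕ} (K : Set (Euc n)) : Prop :=
  Convex ℝ K ∧ IsCompact K ∧ (interior K).Nonempty

/-- The polar body `K* = {x : ⟨x,y⟩ ≤ 1 for all y ∈ K}`. -/
def polarBody {n : ℕ} (K : Set (Euc n)) : Set (Euc n) :=
  {x | ∀ y ∈ K, ⟪x, y⟫ ≤ 1}

/-- `λ₁(K, S)`: the infimum of the gauge (Minkowski functional) of `K`
over the nonzero points of `S`. -/
def lambdaOne {n : ℕ} (K : Set (Euc n)) (S : Set (Euc n)) : ℝ :=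
  sInf (gauge K '' (S \ {0}))

/-- The dual lattice `L* = {y : ⟨x,y⟩ ∈ ℤ for all x ∈ L}`. -/
def dualLattice {n : ℕ} (L : AddSubgroup (Euc n)) : Set (Euc n) :=
  {y | ∀ x ∈ L, ∃ m : ℤ, ⟪x, y⟫ = (m : ℝ)}

lemma mem_smul_polarBody {n : ℕ} {S : Set (Euc n)} {w : Euc n} {r : ℝ} (hr : 0 < r) :
    w ∈ r • polarBody S ↔ ∀ u ∈ S, ⟪w, u⟫ ≤ r := by
  rw [Set.mem_smul_set_iff_inv_smul_mem₀ hr.ne']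
  simp only [polarBody, Set.mem_setOf_eq, real_inner_smul_left]
  constructor
  · intro h u hu
    have := h u hu
    rw [inv_mul_le_iff₀ hr] at this
    linarith [this]
  · intro h u hu
    rw [inv_mul_le_iff₀ hr]
    linarith [h u hu]

lemma gaugePolar_le {n : ℕ} {S : Set (Euc n)} {w : Euc n} {r : ℝ} (hr : 0 < r)
    (h : ∀ u ∈ S, ⟪w, u⟫ ≤ r) : gauge (polarBody S) w ≤ r :=
  gauge_le_of_mem hr.le ((mem_smul_polarBody hr).2 h)

lemma le_gaugePolar {n : ℕ} {S : Set (Euc n)} {w : Euc n} {c : ℝ}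
    (hne : ∃ r, 0 < r ∧ ∀ u ∈ S, ⟪w, u⟫ ≤ r)
    (h : ∀ r, 0 < r → (∀ u ∈ S, ⟪w, u⟫ ≤ r) → c ≤ r) :
    c ≤ gauge (polarBody S) w := by
  rw [gauge_def]
  apply le_csInf
  · obtain ⟨r, hr, hru⟩ := hne
    exact ⟨r, Set.mem_sep (Set.mem_Ioi.2 hr) ((mem_smul_polarBody hr).2 hru)⟩
  · rintro r ⟨hr, hmem⟩
    exact h r hr ((mem_smul_polarBody hr).1 hmem)

lemma exists_inner_bound {n : ℕ} {A : Set (Euc n)} (hA : Bornology.IsBounded A)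
    (w : Euc n) : ∃ r, 0 < r ∧ ∀ u ∈ A - A, ⟪w, u⟫ ≤ r := by
  obtain ⟨R, hR⟩ := (isBounded_iff_forall_norm_le).1 hA
  refine ⟨‖w‖ * (|R| + |R|) + 1, by positivity, ?_⟩
  rintro u ⟨a, ha, b, hb, rfl⟩
  have h1 : ⟪w, a - b⟫ ≤ ‖w‖ * ‖a - b‖ := real_inner_le_norm _ _
  have h2 : ‖a - b‖ ≤ ‖a‖ + ‖b‖ := norm_sub_le _ _
  have h3 : ‖a‖ ≤ |R| := (hR a ha).trans (le_abs_self R)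
  have h4 : ‖b‖ ≤ |R| := (hR b hb).trans (le_abs_self R)
  nlinarith [norm_nonneg w, norm_nonneg (a - b)]

theorem exists_lattice_point_in_slab_of_flatness
    {n : ℕ} (K : Set (Euc n)) (hK : IsConvexBody K)
    (L : AddSubgroup (Euc n)) (hdisc : DiscreteTopology L)
    (hfull : Submodule.span ℝ (L : Set (Euc n)) = ⊤)
    (f : ℝ) (hf : 0 < f)
    (hflat : ∀ C : Set (Euc n), IsConvexBody C →
      f ≤ lambdaOne (polarBody (C - C)) (dualLattice L) →
      (C ∩ (L : Set (Euc n))).Nonempty)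
    (y : Euc n) (hy : y ∈ dualLattice L) (hy0 : y ≠ 0)
    (hyshort : gauge (polarBody (K - K)) y ≤
      lambdaOne (polarBody (K - K)) (dualLattice L) + 1) :
    (K ∩ (L : Set (Euc n))).Nonempty →
      ∃ x ∈ K ∩ (L : Set (Euc n)),
        ⟪y, x⟫ ≤ sInf ((fun z => ⟪y, z⟫) '' K) + f + 1 := by
  rintro ⟨x₀, hx₀K, hx₀L⟩
  obtain ⟨hKcv, hKc, hKint⟩ := hK
  have hKne : K.Nonempty := hKint.mono interior_subset
  have hcont : Continuous fun z : Euc n => ⟪y, z⟫ :=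
    Continuous.inner continuous_const continuous_id
  set m := sInf ((fun z => ⟪y, z⟫) '' K) with hm_def
  obtain ⟨z₀, hz₀K, hz₀min⟩ := hKc.exists_isMinOn hKne hcont.continuousOn
  have hz₀min' : ∀ z ∈ K, ⟪y, z₀⟫ ≤ ⟪y, z⟫ := fun z hz => hz₀min hz
  have hm : m = ⟪y, z₀⟫ := by
    apply le_antisymm
    · exact csInf_le (hKc.image hcont).bddBelow (Set.mem_image_of_mem _ hz₀K)
    · refine le_csInf (hKne.image _) ?_
      rintro r ⟨z, hz, rfl⟩
      exact hz₀min' z hz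
  by_cases hcase : ∀ z ∈ K, ⟪y, z⟫ ≤ m + f + 1
  · exact ⟨x₀, ⟨hx₀K, hx₀L⟩, hcase x₀ hx₀K⟩
  push_neg at hcase
  obtain ⟨z₁, hz₁K, hz₁⟩ := hcase
  obtain ⟨zM, hzMK, hzMmax⟩ := hKc.exists_isMaxOn hKne hcont.continuousOn
  have hzMmax' : ∀ z ∈ K, ⟪y, z⟫ ≤ ⟪y, zM⟫ := fun z hz => hzMmax hz
  set W := ⟪y, zM⟫ - ⟪y, z₀⟫ with hW_def
  have hWgt : f + 1 < W := by
    have := hzMmax' z₁ hz₁K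
    simp only [hW_def]
    linarith [hm ▸ hz₁]
  have hW0 : 0 < W := by linarith
  set s := (f + 1) / W with hs_def
  have hs0 : 0 < s := div_pos (by linarith) hW0
  have hs1 : s < 1 := (div_lt_one hW0).2 hWgt
  have hsW : s * W = f + 1 := div_mul_cancel₀ _ hW0.ne'
  -- width of K in direction y is at least W, so lambdaOne(K) ≥ W - 1
  have hWle : W ≤ gauge (polarBody (K - K)) y := by
    apply le_gaugePolar (exists_inner_bound hKc.isBounded y)
    intro r hr h
    have := h (zM - z₀) (Set.sub_mem_sub hzMK hz₀K)
    rw [inner_sub_right] at this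
    linarith
  have hlam : W - 1 ≤ lambdaOne (polarBody (K - K)) (dualLattice L) := by linarith
  have hbdd : BddBelow (gauge (polarBody (K - K)) '' (dualLattice L \ {0})) := by
    refine ⟨0, ?_⟩
    rintro r ⟨w, _, rfl⟩
    exact gauge_nonneg _
  have hgw : ∀ w ∈ dualLattice L \ {0}, W - 1 ≤ gauge (polarBody (K - K)) w := by
    intro w hw
    exact hlam.trans (csInf_le hbdd (Set.mem_image_of_mem _ hw))
  -- the truncated body C
  set C := K ∩ {z : Euc n | ⟪y, z⟫ ≤ m + (f + 1)} with hC_def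
  have hhomK : ∀ a ∈ K, z₀ + s • (a - z₀) ∈ K := by
    intro a ha
    have heq : z₀ + s • (a - z₀) = (1 - s) • z₀ + s • a := by module
    rw [heq]
    exact hKcv hz₀K ha (by linarith) hs0.le (by ring)
  have hhom : ∀ a ∈ K, z₀ + s • (a - z₀) ∈ C := by
    intro a ha
    refine ⟨hhomK a ha, ?_⟩
    show ⟪y, z₀ + s • (a - z₀)⟫ ≤ m + (f + 1)
    rw [inner_add_right, real_inner_smul_right, inner_sub_right]
    have h1 : ⟪y, a⟫ ≤ ⟪y, zM⟫ := hzMmax' a ha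
    have h2 : ⟪y, z₀⟫ ≤ ⟪y, a⟫ := hz₀min' a ha
    have h3 : s * (⟪y, a⟫ - ⟪y, z₀⟫) ≤ s * W :=
      mul_le_mul_of_nonneg_left (by simp only [hW_def]; linarith) hs0.le
    rw [hm]
    linarith
  have hCc : IsCompact C :=
    hKc.inter_right (isClosed_le hcont continuous_const)
  have hCcv : Convex ℝ C := by
    apply hKcv.inter
    have hlin : IsLinearMap ℝ (fun z : Euc n => ⟪y, z⟫) :=
      ⟨fun a b => inner_add_right _ _ _, fun c a => real_inner_smul_right _ _ _⟩
    exact convex_halfSpace_le hlin _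
  have hCint : (interior C).Nonempty := by
    obtain ⟨p, hp⟩ := hKint
    obtain ⟨δ, hδ0, hball⟩ := Metric.isOpen_iff.1 isOpen_interior p hp
    have hballK : Metric.ball p δ ⊆ K := hball.trans interior_subset
    refine ⟨z₀ + s • (p - z₀), ?_⟩
    rw [mem_interior]
    refine ⟨Metric.ball (z₀ + s • (p - z₀)) (s * δ), ?_, Metric.isOpen_ball,
      Metric.mem_ball_self (by positivity)⟩
    intro q hq
    set p' := p + s⁻¹ • (q - (z₀ + s • (p - z₀))) with hp'_def
    have hp'K : p' ∈ K := by
      apply hballK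
      rw [Metric.mem_ball, dist_eq_norm]
      have : p' - p = s⁻¹ • (q - (z₀ + s • (p - z₀))) := by simp [hp'_def]
      rw [this, norm_smul, Real.norm_eq_abs, abs_of_pos (inv_pos.2 hs0)]
      rw [Metric.mem_ball, dist_eq_norm] at hq
      calc s⁻¹ * ‖q - (z₀ + s • (p - z₀))‖ < s⁻¹ * (s * δ) := by
            exact mul_lt_mul_of_pos_left hq (inv_pos.2 hs0)
        _ = δ := by field_simp
    have hq_eq : q = z₀ + s • (p' - z₀) := by
      simp only [hp'_def]
      have harr : p + s⁻¹ • (q - (z₀ + s • (p - z₀))) - z₀ =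
          (p - z₀) + s⁻¹ • (q - (z₀ + s • (p - z₀))) := by abel
      rw [harr, smul_add, smul_inv_smul₀ hs0.ne']
      abel
    rw [hq_eq]
    exact hhom p' hp'K
  have hCbody : IsConvexBody C := ⟨hCcv, hCc, hCint⟩
  -- λ₁ of C is at least f
  have hlamC : f ≤ lambdaOne (polarBody (C - C)) (dualLattice L) := by
    have hymem : y ∈ dualLattice L \ {0} := ⟨hy, by simpa using hy0⟩
    rw [lambdaOne]
    apply le_csInf ⟨gauge (polarBody (C - C)) y, Set.mem_image_of_mem _ hymem⟩
    rintro r ⟨w, hw, rfl⟩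
    apply le_gaugePolar (exists_inner_bound hCc.isBounded w)
    intro r hr hru
    have hKKbound : ∀ u ∈ K - K, ⟪w, u⟫ ≤ r / s := by
      rintro u ⟨a, ha, b, hb, rfl⟩
      have hmem : s • (a - b) ∈ C - C := by
        have : s • (a - b) = (z₀ + s • (a - z₀)) - (z₀ + s • (b - z₀)) := by module
        rw [this]
        exact Set.sub_mem_sub (hhom a ha) (hhom b hb)
      have := hru _ hmem
      rw [real_inner_smul_right] at this
      rw [le_div_iff₀ hs0]
      linarith
    have hg1 : gauge (polarBody (K - K)) w ≤ r / s :=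
      gaugePolar_le (div_pos hr hs0) hKKbound
    have hg2 := hgw w hw
    have h5 : (W - 1) * s ≤ r := by
      rw [← le_div_iff₀ hs0]
      linarith
    have h6 : f ≤ (W - 1) * s := by
      rw [hs_def, mul_div_assoc', le_div_iff₀ hW0]
      nlinarith
    linarith
  obtain ⟨x, hxC, hxL⟩ := hflat C hCbody hlamC
  refine ⟨x, ⟨hxC.1, hxL⟩, ?_⟩
  have := hxC.2
  simp only [Set.mem_setOf_eq] at this
  linarith

end
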